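/- Every element of finite order n in the group G of formal power series under composition is conjugate in G to its linear term ℓ_ω(z) = ωz, where ω is the linear coefficient of f. -/

import Mathlib

open PowerSeries

/-- Composition (substitution) of formal power series: coefficient formula,
valid for `g` with zero constant term. -/
noncomputable def PS.comp {F : Type*} [CommRing F] (f g : PowerSeries F) : PowerSeries F :=
  PowerSeries.mk fun k =>
    ∑ n ∈ Finset.range (k + 1), (PowerSeries.coeff n f) * (PowerSeries.coeff k (g ^ n))

/-- The group `G` of series with zero constant term and nonzero linear coefficient. -/
def PS.G (F : Type*) [CommRing F] : Set (PowerSeries F) :=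
  {f | PowerSeries.constantCoeff f = 0 ∧ PowerSeries.coeff 1 f ≠ 0}

/-- `n`-fold compositional iterate of `f`. -/
noncomputable def PS.iter {F : Type*} [CommRing F] (f : PowerSeries F) : ℕ → PowerSeries F
  | 0 => PowerSeries.X
  | n + 1 => PS.comp f (PS.iter f n)

/-- `f` has compositional order exactly `n`. -/
def PS.HasOrder {F : Type*} [CommRing F] (f : PowerSeries F) (n : ℕ) : Prop :=
  PS.iter f n = PowerSeries.X ∧ ∀ m, 0 < m → m < n → PS.iter f m ≠ PowerSeries.X

namespace PSAux

variable {F : Type*} [CommRing F]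

theorem coeff_comp (f g : PowerSeries F) (k : ℕ) :
    coeff k (PS.comp f g) =
      ∑ n ∈ Finset.range (k + 1), (coeff n f) * (coeff k (g ^ n)) := by
  simp [PS.comp]

/-- If `g` has zero constant term, `coeff k (g^n) = 0` for `k < n`. -/
theorem coeff_pow_eq_zero {g : PowerSeries F} (hg : constantCoeff g = 0) :
    ∀ n k, k < n → coeff k (g ^ n) = 0 := by
  intro n
  induction n with
  | zero => intro k hk; omega
  | succ n ih =>
    intro k hk
    rw [pow_succ, PowerSeries.coeff_mul]
    apply Finset.sum_eq_zero
    intro p hp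
    have h : p.1 + p.2 = k := Finset.HasAntidiagonal.mem_antidiagonal.mp hp
    rcases lt_or_ge p.1 n with h2 | h2
    · rw [ih p.1 h2, zero_mul]
    · have hp2 : p.2 = 0 := by omega
      rw [hp2, PowerSeries.coeff_zero_eq_constantCoeff, hg, mul_zero]

theorem coeff_pow_self {g : PowerSeries F} (hg : constantCoeff g = 0) (n : ℕ) :
    coeff n (g ^ n) = (coeff 1 g) ^ n := by
  induction n with
  | zero => simp
  | succ n ih =>
    rw [pow_succ, PowerSeries.coeff_mul]
    rw [Finset.sum_eq_single (n, 1)]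
    · rw [ih]; ring
    · intro p hp hne
      have h : p.1 + p.2 = n + 1 := Finset.HasAntidiagonal.mem_antidiagonal.mp hp
      rcases lt_or_ge p.1 n with h2 | h2
      · rw [coeff_pow_eq_zero hg n p.1 h2, zero_mul]
      · have : p.1 = n ∨ p.1 = n + 1 := by omega
        rcases this with hp1 | hp1
        · exfalso; apply hne
          have : p.2 = 1 := by omega
          exact Prod.ext hp1 this
        · have hp2 : p.2 = 0 := by omega
          rw [hp2, PowerSeries.coeff_zero_eq_constantCoeff, hg, mul_zero]
    · intro h
      exfalso; apply h; rw [Finset.HasAntidiagonal.mem_antidiagonal]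

theorem comp_X (f : PowerSeries F) : PS.comp f X = f := by
  ext k
  rw [coeff_comp]
  rw [Finset.sum_eq_single k]
  · rw [← pow_one ((X : PowerSeries F))]
    simp [PowerSeries.coeff_X_pow]
  · intro n hn hne
    rw [PowerSeries.coeff_X_pow, if_neg (fun h => hne h.symm), mul_zero]
  · intro h; exfalso; exact h (Finset.self_mem_range_succ k)

theorem X_comp {g : PowerSeries F} (hg : constantCoeff g = 0) : PS.comp X g = g := by
  ext k
  rw [coeff_comp]
  rcases Nat.eq_zero_or_pos k with rfl | hk
  · simp [PowerSeries.coeff_zero_eq_constantCoeff, hg]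
  · rw [Finset.sum_eq_single 1]
    · simp
    · intro n hn hne
      rw [PowerSeries.coeff_X, if_neg hne, zero_mul]
    · intro h
      exfalso; apply h; rw [Finset.mem_range]; omega

theorem zero_comp (g : PowerSeries F) : PS.comp 0 g = 0 := by
  ext k; rw [coeff_comp]; simp

theorem one_comp (g : PowerSeries F) : PS.comp 1 g = 1 := by
  ext k
  rw [coeff_comp]
  rw [Finset.sum_eq_single 0]
  · simp
  · intro n hn hne
    rw [PowerSeries.coeff_one, if_neg hne, zero_mul]
  · intro h; exfalso; apply h; rw [Finset.mem_range]; omega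

theorem add_comp (a b g : PowerSeries F) :
    PS.comp (a + b) g = PS.comp a g + PS.comp b g := by
  ext k
  simp only [coeff_comp, map_add]
  rw [← Finset.sum_add_distrib]
  congr 1; ext n; ring

theorem C_mul_comp (c : F) (a g : PowerSeries F) :
    PS.comp (PowerSeries.C c * a) g = PowerSeries.C c * PS.comp a g := by
  ext k
  simp only [coeff_comp, PowerSeries.coeff_C_mul, Finset.mul_sum]
  congr 1; ext n; ring

theorem sum_comp {ι : Type*} (s : Finset ι) (a : ι → PowerSeries F) (g : PowerSeries F) :
    PS.comp (∑ i ∈ s, a i) g = ∑ i ∈ s, PS.comp (a i) g := by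
  classical
  induction s using Finset.induction with
  | empty => simp [zero_comp]
  | insert _ _ hx ih =>
    rw [Finset.sum_insert hx, Finset.sum_insert hx, add_comp, ih]

theorem constantCoeff_comp {g : PowerSeries F} (hg : constantCoeff g = 0)
    (f : PowerSeries F) : constantCoeff (PS.comp f g) = constantCoeff f := by
  have := coeff_comp f g 0
  simp only [PowerSeries.coeff_zero_eq_constantCoeff] at this ⊢
  rw [this]
  simp

theorem coeff_one_comp (f g : PowerSeries F) :
    coeff 1 (PS.comp f g) = coeff 1 f * coeff 1 g := by
  rw [coeff_comp]
  rw [Finset.sum_range_succ, Finset.sum_range_one]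
  simp

/-- Coefficient of polynomial evaluation, as a range sum. -/
theorem coeff_eval₂ {g : PowerSeries F} (hg : constantCoeff g = 0)
    (p : Polynomial F) (k : ℕ) :
    coeff k (Polynomial.eval₂ (PowerSeries.C) g p) =
      ∑ n ∈ Finset.range (k + 1), p.coeff n * coeff k (g ^ n) := by
  classical
  rw [Polynomial.eval₂_eq_sum, Polynomial.sum]
  rw [map_sum]
  have h1 : ∑ n ∈ p.support, coeff k (PowerSeries.C (p.coeff n) * g ^ n)
      = ∑ n ∈ p.support, p.coeff n * coeff k (g ^ n) := by
    congr 1; ext n; rw [PowerSeries.coeff_C_mul]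
  rw [h1]
  have hL : ∑ n ∈ p.support, p.coeff n * coeff k (g ^ n)
      = ∑ n ∈ p.support ∪ Finset.range (k + 1), p.coeff n * coeff k (g ^ n) := by
    apply Finset.sum_subset Finset.subset_union_left
    intro x _ hx
    rw [Polynomial.notMem_support_iff.mp hx, zero_mul]
  have hR : ∑ n ∈ Finset.range (k + 1), p.coeff n * coeff k (g ^ n)
      = ∑ n ∈ p.support ∪ Finset.range (k + 1), p.coeff n * coeff k (g ^ n) := by
    apply Finset.sum_subset Finset.subset_union_right
    intro x _ hx
    rw [Finset.mem_range] at hx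
    rw [coeff_pow_eq_zero hg x k (by omega), mul_zero]
  rw [hL, hR]

/-- Stability: the comp agrees with evaluating any sufficiently long truncation. -/
theorem coeff_comp_eq_eval₂ {g : PowerSeries F} (hg : constantCoeff g = 0)
    (f : PowerSeries F) (k m : ℕ) (hkm : k < m) :
    coeff k (PS.comp f g) =
      coeff k (Polynomial.eval₂ (PowerSeries.C) g (trunc m f)) := by
  rw [coeff_comp, coeff_eval₂ hg]
  apply Finset.sum_congr rfl
  intro n hn
  rw [Finset.mem_range] at hn
  rw [PowerSeries.coeff_trunc, if_pos (by omega)]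

theorem mul_comp {g : PowerSeries F} (hg : constantCoeff g = 0) (a b : PowerSeries F) :
    PS.comp (a * b) g = PS.comp a g * PS.comp b g := by
  ext k
  rw [coeff_comp_eq_eval₂ hg (a * b) k (k + 1) (by omega)]
  have step1 : coeff k (Polynomial.eval₂ (PowerSeries.C) g (trunc (k+1) (a * b)))
      = coeff k (Polynomial.eval₂ (PowerSeries.C) g (trunc (k+1) a * trunc (k+1) b)) := by
    rw [coeff_eval₂ hg, coeff_eval₂ hg]
    apply Finset.sum_congr rfl
    intro m hm
    rw [Finset.mem_range] at hm
    congr 1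
    rw [PowerSeries.coeff_trunc, if_pos (by omega : m < k + 1)]
    rw [Polynomial.coeff_mul, PowerSeries.coeff_mul]
    apply Finset.sum_congr rfl
    intro p hp
    have h : p.1 + p.2 = m := Finset.HasAntidiagonal.mem_antidiagonal.mp hp
    rw [PowerSeries.coeff_trunc, PowerSeries.coeff_trunc,
      if_pos (by omega : p.1 < k + 1), if_pos (by omega : p.2 < k + 1)]
  rw [step1, Polynomial.eval₂_mul, PowerSeries.coeff_mul, PowerSeries.coeff_mul]
  apply Finset.sum_congr rfl
  intro p hp
  have h : p.1 + p.2 = k := Finset.HasAntidiagonal.mem_antidiagonal.mp hp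
  rw [← coeff_comp_eq_eval₂ hg a p.1 (k+1) (by omega),
    ← coeff_comp_eq_eval₂ hg b p.2 (k+1) (by omega)]

theorem pow_comp {g : PowerSeries F} (hg : constantCoeff g = 0) (a : PowerSeries F) (n : ℕ) :
    PS.comp (a ^ n) g = (PS.comp a g) ^ n := by
  induction n with
  | zero => simp [one_comp]
  | succ n ih => rw [pow_succ, pow_succ, mul_comp hg, ih]

theorem comp_assoc {b c : PowerSeries F} (hb : constantCoeff b = 0)
    (hc : constantCoeff c = 0) (a : PowerSeries F) :
    PS.comp (PS.comp a b) c = PS.comp a (PS.comp b c) := by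
  ext k
  rw [coeff_comp, coeff_comp]
  have hLHS : ∀ m ∈ Finset.range (k + 1),
      coeff m (PS.comp a b) * coeff k (c ^ m)
      = ∑ n ∈ Finset.range (k + 1), coeff n a * coeff m (b ^ n) * coeff k (c ^ m) := by
    intro m hm
    rw [Finset.mem_range] at hm
    rw [coeff_comp, Finset.sum_mul]
    apply Finset.sum_subset (by intro x hx; rw [Finset.mem_range] at *; omega)
    intro x _ hx
    rw [Finset.mem_range] at hx
    rw [coeff_pow_eq_zero hb x m (by omega), mul_zero, zero_mul]
  rw [Finset.sum_congr rfl hLHS, Finset.sum_comm]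
  apply Finset.sum_congr rfl
  intro nn hn
  have : coeff k ((PS.comp b c) ^ nn) = coeff k (PS.comp (b ^ nn) c) := by
    rw [← pow_comp hc]
  rw [this, coeff_comp, Finset.mul_sum]
  apply Finset.sum_congr rfl
  intro m _
  ring

/-- Coefficients of the compositional left inverse of a series with
zero constant term and linear coefficient 1. -/
noncomputable def icoef (g : PowerSeries F) : ℕ → F
  | k => (if k = 1 then 1 else 0) -
      ∑ m ∈ (Finset.range k).attach, icoef g m.1 * coeff k (g ^ m.1)
  decreasing_by exact Finset.mem_range.mp m.2

theorem icoef_spec (g : PowerSeries F) (k : ℕ) :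
    icoef g k = (if k = 1 then 1 else 0) -
      ∑ m ∈ Finset.range k, icoef g m * coeff k (g ^ m) := by
  rw [icoef]
  congr 1
  exact Finset.sum_attach (Finset.range k) (fun m => icoef g m * coeff k (g ^ m))

theorem icoef_zero (g : PowerSeries F) : icoef g 0 = 0 := by
  rw [icoef_spec]; simp

theorem icoef_one (g : PowerSeries F) : icoef g 1 = 1 := by
  rw [icoef_spec]
  simp [icoef_zero]

theorem icoef_comp {g : PowerSeries F} (h0 : constantCoeff g = 0)
    (h1 : coeff 1 g = 1) :
    PS.comp (PowerSeries.mk (icoef g)) g = X := by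
  ext k
  rw [coeff_comp, Finset.sum_range_succ]
  simp only [PowerSeries.coeff_mk]
  rw [coeff_pow_self h0, h1, one_pow, mul_one, icoef_spec, PowerSeries.coeff_X]
  ring

theorem exists_inv {g : PowerSeries F} (h0 : constantCoeff g = 0)
    (h1 : coeff 1 g = 1) :
    ∃ h : PowerSeries F, constantCoeff h = 0 ∧ coeff 1 h = 1 ∧
      PS.comp h g = X ∧ PS.comp g h = X := by
  set h := PowerSeries.mk (icoef g) with hh
  have hh0 : constantCoeff h = 0 := by
    rw [← PowerSeries.coeff_zero_eq_constantCoeff, hh, PowerSeries.coeff_mk, icoef_zero]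
  have hh1 : coeff 1 h = 1 := by rw [hh, PowerSeries.coeff_mk, icoef_one]
  have hleft : PS.comp h g = X := icoef_comp h0 h1
  set h' := PowerSeries.mk (icoef h) with hh'
  have hleft' : PS.comp h' h = X := icoef_comp hh0 hh1
  have hgh' : g = h' := by
    have := comp_assoc hh0 h0 h'
    rw [hleft', hleft, X_comp h0, comp_X] at this
    exact this
  refine ⟨h, hh0, hh1, hleft, ?_⟩
  rw [hgh', hleft']

end PSAux

theorem stmt_6 (F : Type*) [Field F] [CharZero F] (f : PowerSeries F) (hf : f ∈ PS.G F)
    (n : ℕ) (hn : 0 < n) (hord : PS.HasOrder f n) :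
    ∃ g ∈ PS.G F, ∃ ginv ∈ PS.G F,
      PS.comp g ginv = PowerSeries.X ∧ PS.comp ginv g = PowerSeries.X ∧
      PS.comp (PS.comp g f) ginv =
        PowerSeries.C (PowerSeries.coeff 1 f) * PowerSeries.X := by
  classical
  obtain ⟨hf0, hf1⟩ := hf
  set ω : F := PowerSeries.coeff 1 f with hω
  set u : F := ω⁻¹ with hu
  have huω : ω * u = 1 := mul_inv_cancel₀ hf1
  -- basic facts about iterates
  have hiter0 : ∀ k, PowerSeries.constantCoeff (PS.iter f k) = 0 := by
    intro k
    induction k with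
    | zero => simp [PS.iter]
    | succ k ih =>
      show PowerSeries.constantCoeff (PS.comp f (PS.iter f k)) = 0
      rw [PSAux.constantCoeff_comp ih f, hf0]
  have hiter1 : ∀ k, PowerSeries.coeff 1 (PS.iter f k) = ω ^ k := by
    intro k
    induction k with
    | zero => simp [PS.iter]
    | succ k ih =>
      show PowerSeries.coeff 1 (PS.comp f (PS.iter f k)) = ω ^ (k + 1)
      rw [PSAux.coeff_one_comp, ih, ← hω, pow_succ, mul_comm]
  have hωn : ω ^ n = 1 := by
    have := hord.1
    have h1 := hiter1 n
    rw [this] at h1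
    simpa using h1.symm
  have hun : u ^ n = 1 := by
    rw [hu, inv_pow, hωn, inv_one]
  -- the averaging series
  have hn0 : (n : F) ≠ 0 := Nat.cast_ne_zero.mpr hn.ne'
  set T : ℕ → PowerSeries F := fun j => PowerSeries.C (u ^ j) * PS.iter f j with hT
  set g0 : PowerSeries F := ∑ k ∈ Finset.range n, T k with hg0
  set g : PowerSeries F := PowerSeries.C (n : F)⁻¹ * g0 with hg
  have hg0const : PowerSeries.constantCoeff g0 = 0 := by
    rw [hg0, map_sum]
    apply Finset.sum_eq_zero
    intro k _
    rw [hT]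
    simp only []
    rw [← PowerSeries.coeff_zero_eq_constantCoeff, PowerSeries.coeff_C_mul,
      PowerSeries.coeff_zero_eq_constantCoeff, hiter0, mul_zero]
  have hgconst : PowerSeries.constantCoeff g = 0 := by
    rw [hg, ← PowerSeries.coeff_zero_eq_constantCoeff, PowerSeries.coeff_C_mul,
      PowerSeries.coeff_zero_eq_constantCoeff, hg0const, mul_zero]
  have hg01 : PowerSeries.coeff 1 g0 = (n : F) := by
    rw [hg0, map_sum]
    have : ∀ k ∈ Finset.range n, PowerSeries.coeff 1 (T k) = 1 := by
      intro k _
      rw [hT]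
      simp only []
      rw [PowerSeries.coeff_C_mul, hiter1, ← mul_pow, mul_comm u ω, huω, one_pow]
    rw [Finset.sum_congr rfl this, Finset.sum_const, Finset.card_range, nsmul_eq_mul, mul_one]
  have hg1 : PowerSeries.coeff 1 g = 1 := by
    rw [hg, PowerSeries.coeff_C_mul, hg01, inv_mul_cancel₀ hn0]
  -- iterates commute with f under composition
  have hcomm : ∀ k, PS.comp (PS.iter f k) f = PS.comp f (PS.iter f k) := by
    intro k
    induction k with
    | zero =>
      show PS.comp PowerSeries.X f = PS.comp f PowerSeries.X
      rw [PSAux.X_comp hf0, PSAux.comp_X]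
    | succ k ih =>
      show PS.comp (PS.comp f (PS.iter f k)) f = PS.comp f (PS.comp f (PS.iter f k))
      rw [PSAux.comp_assoc (hiter0 k) hf0, ih]
  have hiter_succ : ∀ k, PS.comp (PS.iter f k) f = PS.iter f (k + 1) := by
    intro k; rw [hcomm k]; rfl
  -- the key conjugation identity: g ∘ f = ω • g
  have hkey : PS.comp g f = PowerSeries.C ω * g := by
    rw [hg, PSAux.C_mul_comp, hg0, PSAux.sum_comp]
    have hterm : ∀ k ∈ Finset.range n, PS.comp (T k) f = PowerSeries.C ω * T (k + 1) := by
      intro k _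
      rw [hT]
      simp only []
      rw [PSAux.C_mul_comp, hiter_succ k, ← mul_assoc, ← map_mul]
      congr 2
      rw [pow_succ]
      have : ω * (u ^ k * u) = (ω * u) * u ^ k := by ring
      rw [this, huω, one_mul]
    rw [Finset.sum_congr rfl hterm, ← Finset.mul_sum]
    have hTn : T n = T 0 := by
      rw [hT]
      simp only []
      rw [hun, hord.1]
      norm_num [PS.iter]
    have hshift : (∑ k ∈ Finset.range n, T (k + 1)) = ∑ k ∈ Finset.range n, T k := by
      have h1 : (∑ k ∈ Finset.range n, T (k + 1)) + T 0 = ∑ k ∈ Finset.range (n + 1), T k :=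
        (Finset.sum_range_succ' T n).symm
      have h2 : (∑ k ∈ Finset.range (n + 1), T k) = (∑ k ∈ Finset.range n, T k) + T n :=
        Finset.sum_range_succ T n
      have := h1.trans h2
      rw [hTn] at this
      exact add_right_cancel this
    rw [hshift]
    ring
  -- obtain the inverse
  obtain ⟨h, hh0, hh1, hhg, hgh⟩ := PSAux.exists_inv hgconst hg1
  refine ⟨g, ⟨hgconst, by rw [hg1]; exact one_ne_zero⟩,
    h, ⟨hh0, by rw [hh1]; exact one_ne_zero⟩, hgh, hhg, ?_⟩
  rw [hkey, PSAux.C_mul_comp, hgh]
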